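/- Let n(x) := (2π)^{-1/2} exp(−x²/2) be the standard normal density and N(x) := ∫_{-∞}^x n(y) dy the standard normal distribution function. Fix r < 0, μ > 0 and T > 0, and define F(v) := N(−(r+μT)v/√T) − exp(−2μrv²)·N(−(r−μT)v/√T) for v ∈ ℝ. Then F'(v) < 0 for every v > 0; in particular F is strictly decreasing on (0, ∞). -/

import Mathlib

open MeasureTheory

noncomputable def stdGaussPDF (x : ℝ) : ℝ :=
  (Real.sqrt (2 * Real.pi))⁻¹ * Real.exp (-x ^ 2 / 2)

noncomputable def stdGaussCDF (x : ℝ) : ℝ :=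
  ∫ y in Set.Iic x, stdGaussPDF y

lemma pdf_pos (x : ℝ) : 0 < stdGaussPDF x := by
  unfold stdGaussPDF
  have := Real.pi_pos
  positivity

lemma pdf_cont : Continuous stdGaussPDF := by
  unfold stdGaussPDF; fun_prop

lemma pdf_integrable : Integrable stdGaussPDF := by
  have h : stdGaussPDF = fun x => (Real.sqrt (2*Real.pi))⁻¹ * Real.exp (-(1/2 : ℝ) * x^2) := by
    funext x; unfold stdGaussPDF; congr 1; ring_nf
  rw [h]
  exact (integrable_exp_neg_mul_sq (by norm_num)).const_mul _

lemma cdf_hasDeriv (x : ℝ) : HasDerivAt stdGaussCDF (stdGaussPDF x) x := by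
  have hint := pdf_integrable
  have heq : stdGaussCDF = fun t => (∫ y in Set.Iic (0:ℝ), stdGaussPDF y) + ∫ y in (0:ℝ)..t, stdGaussPDF y := by
    funext t
    unfold stdGaussCDF
    rw [← intervalIntegral.integral_Iic_sub_Iic hint.integrableOn hint.integrableOn]
    ring
  rw [heq]
  exact ((intervalIntegral.integral_hasDerivAt_right (hint.intervalIntegrable)
    (pdf_cont.stronglyMeasurableAtFilter _ _) pdf_cont.continuousAt)).const_add _

lemma cdf_pos (x : ℝ) : 0 < stdGaussCDF x := by
  unfold stdGaussCDF
  rw [setIntegral_pos_iff_support_of_nonneg_ae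
    (Filter.Eventually.of_forall fun y => (pdf_pos y).le) pdf_integrable.integrableOn]
  have : Function.support stdGaussPDF = Set.univ := by
    ext y; simp [Function.support, (pdf_pos y).ne']
  rw [this, Set.univ_inter, Real.volume_Iic]
  simp

/-- with `r < 0`, `μ > 0`, `T > 0` and
`F(v) = N(−(r+μT)v/√T) − exp(−2μrv²) N(−(r−μT)v/√T)`, one has `F'(v) < 0` for
every `v > 0`; in particular `F` is strictly decreasing on `(0,∞)`. -/
theorem stmt_12 (r μ T : ℝ) (hr : r < 0) (hμ : 0 < μ) (hT : 0 < T) (F : ℝ → ℝ)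
    (hF : ∀ v, F v =
      stdGaussCDF (-(r + μ * T) * v / Real.sqrt T)
        - Real.exp (-2 * μ * r * v ^ 2) * stdGaussCDF (-(r - μ * T) * v / Real.sqrt T)) :
    (∀ v : ℝ, 0 < v → deriv F v < 0) ∧ StrictAntiOn F (Set.Ioi 0) := by
  have hFs : F = fun v => stdGaussCDF (-(r + μ * T) * v / Real.sqrt T)
      - Real.exp (-2 * μ * r * v ^ 2) * stdGaussCDF (-(r - μ * T) * v / Real.sqrt T) :=
    funext hF
  set s := Real.sqrt T with hsdef
  have hs : 0 < s := Real.sqrt_pos.mpr hT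
  have hs2 : s ^ 2 = T := Real.sq_sqrt hT.le
  -- derivative of F at any point v
  have hder : ∀ v : ℝ, HasDerivAt F
      (stdGaussPDF (-(r + μ * T) * v / s) * (-(r + μ * T) / s)
        - (Real.exp (-2 * μ * r * v ^ 2) * (-2 * μ * r * (2 * v))
              * stdGaussCDF (-(r - μ * T) * v / s)
           + Real.exp (-2 * μ * r * v ^ 2)
              * (stdGaussPDF (-(r - μ * T) * v / s) * (-(r - μ * T) / s)))) v := by
    intro v
    have h1 : HasDerivAt (fun v : ℝ => -(r + μ * T) * v / s) (-(r + μ * T) / s) v := by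
      simpa using ((hasDerivAt_id v).const_mul (-(r + μ * T))).div_const s
    have h2 : HasDerivAt (fun v : ℝ => -(r - μ * T) * v / s) (-(r - μ * T) / s) v := by
      simpa using ((hasDerivAt_id v).const_mul (-(r - μ * T))).div_const s
    have hA := (cdf_hasDeriv (-(r + μ * T) * v / s)).comp v h1
    have hB := (cdf_hasDeriv (-(r - μ * T) * v / s)).comp v h2
    have h3 : HasDerivAt (fun v : ℝ => -2 * μ * r * v ^ 2) (-2 * μ * r * (2 * v)) v := by
      simpa using (hasDerivAt_pow 2 v).const_mul (-2 * μ * r)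
    have hE := h3.exp
    rw [hFs]
    exact hA.sub (hE.mul hB)
  have key : ∀ v : ℝ, 0 < v → deriv F v < 0 := by
    intro v hv
    have hD := (hder v).deriv
    rw [hFs] at hD ⊢
    rw [← hFs] at hD ⊢
    rw [hD]
    have hkey : Real.exp (-2 * μ * r * v ^ 2) * stdGaussPDF (-(r - μ * T) * v / s)
        = stdGaussPDF (-(r + μ * T) * v / s) := by
      unfold stdGaussPDF
      rw [mul_left_comm, ← Real.exp_add]
      congr 2
      field_simp
      linear_combination (-4 * μ * r) * hs2
    set P := stdGaussPDF (-(r + μ * T) * v / s) with hP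
    set Q := stdGaussPDF (-(r - μ * T) * v / s) with hQ
    set C := stdGaussCDF (-(r - μ * T) * v / s) with hC
    set E := Real.exp (-2 * μ * r * v ^ 2) with hE
    have heq : P * (-(r + μ * T) / s)
        - (E * (-2 * μ * r * (2 * v)) * C + E * (Q * (-(r - μ * T) / s)))
        = -2 * μ * s * P + 4 * μ * r * v * (E * C) := by
      have hsne : s ≠ 0 := hs.ne'
      field_simp
      linear_combination (2 * μ * P) * hs2 + (r - μ * T) * hkey
    rw [heq]
    have t1 : -2 * μ * s * P < 0 := by
      have := mul_pos (mul_pos (by linarith : (0:ℝ) < 2 * μ) hs)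
        (pdf_pos (-(r + μ * T) * v / s))
      rw [hP]; nlinarith
    have t2 : 4 * μ * r * v * (E * C) < 0 := by
      have hp : 0 < E * C := by
        rw [hE, hC]
        exact mul_pos (Real.exp_pos _) (cdf_pos _)
      have : 4 * μ * r * v < 0 := by
        nlinarith [mul_neg_of_neg_of_pos hr (mul_pos hμ hv)]
      exact mul_neg_of_neg_of_pos this hp
    linarith
  refine ⟨key, strictAntiOn_of_deriv_neg (convex_Ioi 0) ?_ ?_⟩
  · exact (Differentiable.continuous fun x => (hder x).differentiableAt).continuousOn
  · intro x hx
    exact key x (by simpa [interior_Ioi] using hx)
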